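/- arXiv:1711.05452 — 2 statements merged into one kernel-verified Lean document; each statement's English description precedes it below -/
import Mathlib

section
/- Let (K, φ) be a topological dynamical system with discrete spectrum. Then the Ellis semigroup E(K, φ) is a compact subset of K^K consisting of homeomorphisms of K, and under composition it is a commutative topological group: composition E(K, φ) × E(K, φ) → E(K, φ) is jointly continuous, each element has an inverse in E(K, φ), and inversion is continuous. -/
/-- A topological dynamical system has discrete spectrum if the linear span of the
eigenvectors of its Koopman operator with unimodular eigenvalues is dense in `C(K)`. -/
def DiscreteSpectrum {K : Type*} [TopologicalSpace K] (φ : K → K) : Prop :=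
  Dense (↑(Submodule.span ℂ
    {f : C(K, ℂ) | f ≠ 0 ∧ ∃ lam : ℂ, ‖lam‖ = 1 ∧ ∀ x, f (φ x) = lam * f x}) :
      Set C(K, ℂ))

/-- The Ellis semigroup of a topological dynamical system: the closure of `{φ^n : n ∈ ℕ}` in
`K → K` with the product (pointwise-convergence) topology. -/
def Ellis {K : Type*} [TopologicalSpace K] (φ : K → K) : Set (K → K) :=
  closure {ψ : K → K | ∃ n : ℕ, ψ = φ^[n]}

open Filter Topology Set Function

set_option linter.unusedSectionVars false

section EllisAux

/-- The set of eigenfunctions. -/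
private def eigSet {K : Type*} [TopologicalSpace K] (φ : K → K) : Set C(K, ℂ) :=
  {f : C(K, ℂ) | f ≠ 0 ∧ ∃ lam : ℂ, ‖lam‖ = 1 ∧ ∀ x, f (φ x) = lam * f x}

private lemma mem_closure_range_ultra {α ι : Type*} [TopologicalSpace α]
    {u : ι → α} {a : α} (h : a ∈ closure (Set.range u)) :
    ∃ G : Ultrafilter ι, Filter.Tendsto u G (𝓝 a) := by
  obtain ⟨F, hFr, hFa⟩ := mem_closure_iff_ultrafilter.mp h
  have hne : (Filter.comap u (F : Filter α)).NeBot := by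
    refine Filter.comap_neBot fun t ht => ?_
    obtain ⟨x, hx1, hx2⟩ := Filter.nonempty_of_mem (Filter.inter_mem ht hFr)
    obtain ⟨i, rfl⟩ := hx2
    exact ⟨i, hx1⟩
  refine ⟨Ultrafilter.of (Filter.comap u (F : Filter α)), ?_⟩
  calc Filter.map u ↑(Ultrafilter.of (Filter.comap u (F : Filter α)))
      ≤ Filter.map u (Filter.comap u (F : Filter α)) :=
        Filter.map_mono (Ultrafilter.of_le _)
    _ ≤ (F : Filter α) := Filter.map_comap_le
    _ ≤ 𝓝 a := hFa

variable {K : Type*} [TopologicalSpace K] [CompactSpace K] [T2Space K] {φ : K → K}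

private lemma ellis_eq (φ : K → K) :
    Ellis φ = closure (Set.range fun n : ℕ => φ^[n]) := by
  unfold Ellis
  have hs : {ψ : K → K | ∃ n : ℕ, ψ = φ^[n]} = Set.range fun n : ℕ => φ^[n] := by
    ext ψ
    exact ⟨fun ⟨n, h⟩ => ⟨n, h.symm⟩, fun ⟨n, h⟩ => ⟨n, h.symm⟩⟩
  rw [hs]

private lemma isClosed_ellis (φ : K → K) : IsClosed (Ellis φ) := isClosed_closure

private lemma iter_eigen {f : C(K, ℂ)} {lam : ℂ}
    (hf : ∀ x, f (φ x) = lam * f x) (n : ℕ) (x : K) :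
    f (φ^[n] x) = lam ^ n * f x := by
  induction n with
  | zero => simp
  | succ n ih => rw [Function.iterate_succ_apply', hf, ih, pow_succ]; ring

private lemma eigen_mu {ψ : K → K} (hψ : ψ ∈ Ellis φ) {f : C(K, ℂ)} {lam : ℂ}
    (hlam : ‖lam‖ = 1) (hf : ∀ x, f (φ x) = lam * f x) :
    ∃ μ : ℂ, ‖μ‖ = 1 ∧ ∀ x, f (ψ x) = μ * f x := by
  rw [ellis_eq] at hψ
  obtain ⟨G, hG⟩ := mem_closure_range_ultra hψ
  obtain ⟨μ, hμs, hμt⟩ := (isCompact_sphere (0 : ℂ) 1).ultrafilter_le_nhds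
    (G.map fun n => lam ^ n) (by
      rw [Ultrafilter.coe_map]
      exact le_principal_iff.mpr (Filter.mem_map.mpr (Filter.univ_mem' fun n =>
        mem_sphere_zero_iff_norm.mpr (by rw [norm_pow, hlam, one_pow]))))
  have hμt' : Filter.Tendsto (fun n => lam ^ n) G (𝓝 μ) := by
    rwa [Ultrafilter.coe_map] at hμt
  refine ⟨μ, mem_sphere_zero_iff_norm.mp hμs, fun x => ?_⟩
  have h1 : Filter.Tendsto (fun n => f (φ^[n] x)) G (𝓝 (f (ψ x))) :=
    (f.continuous.tendsto _).comp (tendsto_pi_nhds.mp hG x)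
  have h2 : Filter.Tendsto (fun n => lam ^ n * f x) G (𝓝 (μ * f x)) := hμt'.mul_const _
  refine tendsto_nhds_unique ?_ h2
  simpa only [iter_eigen hf] using h1

private lemma eqc (hds : DiscreteSpectrum φ) (g : C(K, ℂ)) (y₀ : K) {ε : ℝ} (hε : 0 < ε) :
    ∃ V ∈ 𝓝 y₀, ∀ ψ ∈ Ellis φ, ∀ y ∈ V, dist (g (ψ y)) (g (ψ y₀)) < ε := by
  have hspan : ∀ h : C(K, ℂ), h ∈ Submodule.span ℂ (eigSet φ) → ∀ (z : K) (δ : ℝ), 0 < δ →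
      ∃ V ∈ 𝓝 z, ∀ ψ ∈ Ellis φ, ∀ y ∈ V, dist (h (ψ y)) (h (ψ z)) < δ := by
    intro h hh
    induction hh using Submodule.span_induction with
    | mem f hf =>
      intro z δ hδ
      obtain ⟨-, lam, hlam, heig⟩ := hf
      refine ⟨{y | dist (f y) (f z) < δ}, ?_, ?_⟩
      · exact (isOpen_lt ((map_continuous f).dist continuous_const)
          continuous_const).mem_nhds (by simpa using hδ)
      · intro ψ hψ y hy
        obtain ⟨μ, hμ, hfψ⟩ := eigen_mu hψ hlam heig
        have hd : dist (f (ψ y)) (f (ψ z)) = dist (f y) (f z) := by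
          rw [hfψ, hfψ, dist_eq_norm, ← mul_sub, norm_mul, hμ, one_mul, ← dist_eq_norm]
        rw [hd]
        exact hy
    | zero =>
      intro z δ hδ
      exact ⟨Set.univ, Filter.univ_mem, fun ψ _ y _ => by simpa using hδ⟩
    | add f₁ f₂ h₁ h₂ ih₁ ih₂ =>
      intro z δ hδ
      obtain ⟨V₁, hV₁, hV₁'⟩ := ih₁ z (δ / 2) (by linarith)
      obtain ⟨V₂, hV₂, hV₂'⟩ := ih₂ z (δ / 2) (by linarith)
      refine ⟨V₁ ∩ V₂, Filter.inter_mem hV₁ hV₂, fun ψ hψ y hy => ?_⟩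
      simp only [ContinuousMap.add_apply]
      calc dist (f₁ (ψ y) + f₂ (ψ y)) (f₁ (ψ z) + f₂ (ψ z))
          ≤ dist (f₁ (ψ y)) (f₁ (ψ z)) + dist (f₂ (ψ y)) (f₂ (ψ z)) :=
            dist_add_add_le _ _ _ _
        _ < δ / 2 + δ / 2 := add_lt_add (hV₁' ψ hψ y hy.1) (hV₂' ψ hψ y hy.2)
        _ = δ := by ring
    | smul c f hf ih =>
      intro z δ hδ
      obtain ⟨V, hV, hV'⟩ := ih z (δ / (‖c‖ + 1)) (by positivity)
      refine ⟨V, hV, fun ψ hψ y hy => ?_⟩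
      simp only [ContinuousMap.smul_apply]
      rw [dist_smul₀]
      have h1 := hV' ψ hψ y hy
      have h2 : ‖c‖ * dist (f (ψ y)) (f (ψ z)) ≤ ‖c‖ * (δ / (‖c‖ + 1)) :=
        mul_le_mul_of_nonneg_left h1.le (norm_nonneg c)
      have h4 : ‖c‖ * (δ / (‖c‖ + 1)) < (‖c‖ + 1) * (δ / (‖c‖ + 1)) :=
        mul_lt_mul_of_pos_right (lt_add_one _) (by positivity)
      have h5 : (‖c‖ + 1) * (δ / (‖c‖ + 1)) = δ := by field_simp
      linarith
  have hd : Dense (↑(Submodule.span ℂ (eigSet φ)) : Set C(K, ℂ)) := hds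
  obtain ⟨h, hh, hdist⟩ := hd.exists_dist_lt g (show (0:ℝ) < ε / 3 by linarith)
  obtain ⟨V, hV, hV'⟩ := hspan h (SetLike.mem_coe.mp hh) y₀ (ε / 3) (by linarith)
  refine ⟨V, hV, fun ψ hψ y hy => ?_⟩
  have e1 : dist (g (ψ y)) (h (ψ y)) ≤ dist g h := ContinuousMap.dist_apply_le_dist _
  have e2 : dist (h (ψ y₀)) (g (ψ y₀)) ≤ dist h g := ContinuousMap.dist_apply_le_dist _
  rw [dist_comm h g] at e2
  have e3 := hV' ψ hψ y hy
  calc dist (g (ψ y)) (g (ψ y₀))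
      ≤ dist (g (ψ y)) (h (ψ y)) + dist (h (ψ y)) (h (ψ y₀)) + dist (h (ψ y₀)) (g (ψ y₀)) :=
        dist_triangle4 _ _ _ _
    _ < ε / 3 + ε / 3 + ε / 3 := by linarith
    _ = ε := by ring

private lemma ellis_comp_cont_g (hds : DiscreteSpectrum φ) {ψ : K → K} (hψ : ψ ∈ Ellis φ)
    (g : C(K, ℂ)) : Continuous fun x => g (ψ x) := by
  rw [continuous_iff_continuousAt]
  intro z
  rw [ContinuousAt, Metric.tendsto_nhds]
  intro ε hε
  obtain ⟨V, hV, hV'⟩ := eqc hds g z hε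
  filter_upwards [hV] with y hy
  exact hV' ψ hψ y hy

private lemma ellis_continuous (hds : DiscreteSpectrum φ) {ψ : K → K} (hψ : ψ ∈ Ellis φ) :
    Continuous ψ := by
  rw [continuous_iff_continuousAt]
  intro z
  rw [ContinuousAt, tendsto_nhds]
  intro U hUo hUm
  obtain ⟨g, hg0, hg1, -⟩ := exists_continuous_zero_one_of_isClosed
    (isClosed_singleton (x := ψ z)) hUo.isClosed_compl
    (by simp [Set.disjoint_singleton_left, hUm])
  set g' : C(K, ℂ) := ⟨fun x => ((g x : ℝ) : ℂ),
    Complex.continuous_ofReal.comp (map_continuous g)⟩ with hg'def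
  have hc : Continuous fun x => g' (ψ x) := ellis_comp_cont_g hds hψ g'
  have h0 : g' (ψ z) = 0 := by
    have := hg0 (Set.mem_singleton (ψ z))
    simp only [hg'def, ContinuousMap.coe_mk]
    rw [show g (ψ z) = 0 from this]
    simp
  have hev : ∀ᶠ x in 𝓝 z, dist (g' (ψ x)) (g' (ψ z)) < 1 :=
    Metric.tendsto_nhds.mp (hc.tendsto z) 1 one_pos
  filter_upwards [hev] with x hx
  by_contra hU
  have h1 : g' (ψ x) = 1 := by
    have := hg1 (Set.mem_compl hU)
    simp only [hg'def, ContinuousMap.coe_mk]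
    rw [show g (ψ x) = 1 from this]
    simp
  rw [h0, h1] at hx
  norm_num [dist_eq_norm] at hx

private lemma ellis_injective (hds : DiscreteSpectrum φ) {ψ : K → K} (hψ : ψ ∈ Ellis φ) :
    Function.Injective ψ := by
  intro x y hxy
  have key : ∀ g : C(K, ℂ), g x = g y := by
    have hsub : ∀ h : C(K, ℂ), h ∈ Submodule.span ℂ (eigSet φ) → h x = h y := by
      intro h hh
      induction hh using Submodule.span_induction with
      | mem f hf =>
        obtain ⟨-, lam, hlam, heig⟩ := hf
        obtain ⟨μ, hμ, hfψ⟩ := eigen_mu hψ hlam heig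
        have hμ0 : μ ≠ 0 := by
          intro h0
          rw [h0] at hμ
          simp at hμ
        have hmm : μ * f x = μ * f y := by rw [← hfψ, ← hfψ, hxy]
        exact mul_left_cancel₀ hμ0 hmm
      | zero => rfl
      | add f₁ f₂ _ _ ih₁ ih₂ => simp [ih₁, ih₂]
      | smul c f _ ih => simp [ih]
    intro g
    have hg : g ∈ closure (↑(Submodule.span ℂ (eigSet φ)) : Set C(K, ℂ)) := by
      have hd : Dense (↑(Submodule.span ℂ (eigSet φ)) : Set C(K, ℂ)) := hds
      rw [hd.closure_eq]
      trivial
    obtain ⟨u, hu, hlim⟩ := mem_closure_iff_seq_limit.mp hg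
    have h1 : Filter.Tendsto (fun n => u n x) atTop (𝓝 (g x)) :=
      ((continuous_eval_const x).tendsto g).comp hlim
    have h2 : Filter.Tendsto (fun n => u n y) atTop (𝓝 (g y)) :=
      ((continuous_eval_const y).tendsto g).comp hlim
    have he : (fun n => u n x) = fun n => u n y :=
      funext fun n => hsub _ (SetLike.mem_coe.mp (hu n))
    exact tendsto_nhds_unique (he ▸ h1) h2
  by_contra hne
  obtain ⟨g, hg0, hg1, -⟩ := exists_continuous_zero_one_of_isClosed
    (isClosed_singleton (x := x)) (isClosed_singleton (x := y)) (by simp [hne])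
  have hgk := key ⟨fun t => ((g t : ℝ) : ℂ),
    Complex.continuous_ofReal.comp (map_continuous g)⟩
  simp only [ContinuousMap.coe_mk] at hgk
  rw [show g x = 0 from hg0 rfl, show g y = 1 from hg1 rfl] at hgk
  norm_num at hgk

private lemma closure_range_comp {α : Type*} [TopologicalSpace α] {u : ℕ → α → α}
    (hc : ∀ n, Continuous (u n)) (hu : ∀ n m, ∃ k, u n ∘ u m = u k) :
    ∀ a ∈ closure (Set.range u), ∀ b ∈ closure (Set.range u),
      a ∘ b ∈ closure (Set.range u) := by
  have h1 : ∀ n, ∀ b ∈ closure (Set.range u), u n ∘ b ∈ closure (Set.range u) := by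
    intro n b hb
    obtain ⟨G, hG⟩ := mem_closure_range_ultra hb
    have ht : Filter.Tendsto (fun m => u n ∘ u m) G (𝓝 (u n ∘ b)) := by
      rw [tendsto_pi_nhds]
      intro x
      exact ((hc n).tendsto _).comp (tendsto_pi_nhds.mp hG x)
    refine isClosed_closure.mem_of_tendsto ht (Filter.Eventually.of_forall fun m => ?_)
    obtain ⟨k, hk⟩ := hu n m
    exact subset_closure (hk ▸ Set.mem_range_self k)
  intro a ha b hb
  obtain ⟨F, hF⟩ := mem_closure_range_ultra ha
  have ht : Filter.Tendsto (fun n => u n ∘ b) F (𝓝 (a ∘ b)) := by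
    rw [tendsto_pi_nhds]
    intro x
    exact tendsto_pi_nhds.mp hF (b x)
  exact isClosed_closure.mem_of_tendsto ht
    (Filter.Eventually.of_forall fun n => h1 n b hb)

private lemma ellis_comp_mem (hφ : Continuous φ) {a b : K → K}
    (ha : a ∈ Ellis φ) (hb : b ∈ Ellis φ) : a ∘ b ∈ Ellis φ := by
  rw [ellis_eq] at ha hb ⊢
  exact closure_range_comp (fun n => hφ.iterate n)
    (fun n m => ⟨n + m, (Function.iterate_add φ n m).symm⟩) a ha b hb

private lemma ellis_comm (hφ : Continuous φ) (hds : DiscreteSpectrum φ) {ψ χ : K → K}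
    (hψ : ψ ∈ Ellis φ) (hχ : χ ∈ Ellis φ) : ψ ∘ χ = χ ∘ ψ := by
  have hχc : Continuous χ := ellis_continuous hds hχ
  have step1 : ∀ (n : ℕ) (x : K), φ^[n] (χ x) = χ (φ^[n] x) := by
    intro n x
    rw [ellis_eq] at hχ
    obtain ⟨G, hG⟩ := mem_closure_range_ultra hχ
    have h1 : Filter.Tendsto (fun k => φ^[n] (φ^[k] x)) G (𝓝 (φ^[n] (χ x))) :=
      ((hφ.iterate n).tendsto _).comp (tendsto_pi_nhds.mp hG x)
    have h2 : Filter.Tendsto (fun k => φ^[k] (φ^[n] x)) G (𝓝 (χ (φ^[n] x))) :=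
      tendsto_pi_nhds.mp hG (φ^[n] x)
    have heq : (fun k => φ^[n] (φ^[k] x)) = fun k => φ^[k] (φ^[n] x) := by
      funext k
      rw [← Function.iterate_add_apply, ← Function.iterate_add_apply, Nat.add_comm]
    exact tendsto_nhds_unique (heq ▸ h1) h2
  rw [ellis_eq] at hψ
  obtain ⟨F, hF⟩ := mem_closure_range_ultra hψ
  funext x
  have h1 : Filter.Tendsto (fun n => φ^[n] (χ x)) F (𝓝 (ψ (χ x))) :=
    tendsto_pi_nhds.mp hF (χ x)
  have h2 : Filter.Tendsto (fun n => χ (φ^[n] x)) F (𝓝 (χ (ψ x))) :=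
    (hχc.tendsto _).comp (tendsto_pi_nhds.mp hF x)
  exact tendsto_nhds_unique h1 (by simpa only [← step1, Function.comp_apply] using h2)

private lemma ellis_eval_cont (hds : DiscreteSpectrum φ) :
    Continuous fun p : ↥(Ellis φ) × K => (p.1 : K → K) p.2 := by
  rw [continuous_iff_continuousAt]
  rintro ⟨ψ₀, y₀⟩
  rw [ContinuousAt, tendsto_nhds]
  intro U hUo hUm
  obtain ⟨g, hg0, hg1, -⟩ := exists_continuous_zero_one_of_isClosed
    (isClosed_singleton (x := (ψ₀ : K → K) y₀)) hUo.isClosed_compl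
    (by simp [Set.disjoint_singleton_left, hUm])
  set g' : C(K, ℂ) := ⟨fun x => ((g x : ℝ) : ℂ),
    Complex.continuous_ofReal.comp (map_continuous g)⟩ with hg'def
  obtain ⟨V, hVm, hV⟩ := eqc hds g' y₀ (show (0:ℝ) < 1/2 by norm_num)
  have hWo : IsOpen {ψ : ↥(Ellis φ) |
      dist (g' ((ψ : K → K) y₀)) (g' ((ψ₀ : K → K) y₀)) < 1/4} := by
    apply isOpen_lt ?_ continuous_const
    exact ((map_continuous g').comp
      ((continuous_apply y₀).comp continuous_subtype_val)).dist continuous_const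
  have hWm : ψ₀ ∈ {ψ : ↥(Ellis φ) |
      dist (g' ((ψ : K → K) y₀)) (g' ((ψ₀ : K → K) y₀)) < 1/4} := by
    simp [Set.mem_setOf_eq]
  filter_upwards [prod_mem_nhds (hWo.mem_nhds hWm) hVm]
  rintro ⟨ψ, y⟩ ⟨hψW, hyV⟩
  by_contra hU
  have h0 : g' ((ψ₀ : K → K) y₀) = 0 := by
    simp only [hg'def, ContinuousMap.coe_mk]
    rw [show g ((ψ₀ : K → K) y₀) = 0 from hg0 rfl]
    simp
  have h1 : g' ((ψ : K → K) y) = 1 := by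
    simp only [hg'def, ContinuousMap.coe_mk]
    rw [show g ((ψ : K → K) y) = 1 from hg1 (Set.mem_compl hU)]
    simp
  have h3 := hV (↑ψ) ψ.2 y hyV
  simp only [Set.mem_setOf_eq] at hψW
  have h4 : dist (g' ((ψ : K → K) y)) (g' ((ψ₀ : K → K) y₀)) < 1 := by
    calc dist (g' ((ψ : K → K) y)) (g' ((ψ₀ : K → K) y₀))
        ≤ dist (g' ((ψ : K → K) y)) (g' ((ψ : K → K) y₀)) +
          dist (g' ((ψ : K → K) y₀)) (g' ((ψ₀ : K → K) y₀)) := dist_triangle _ _ _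
      _ < 1 := by linarith
  rw [h0, h1] at h4
  norm_num [dist_eq_norm] at h4

private lemma ellis_comp_cont2 (hds : DiscreteSpectrum φ) :
    Continuous fun z : ↥(Ellis φ) × ↥(Ellis φ) =>
      ((z.1 : K → K) ∘ (z.2 : K → K) : K → K) := by
  apply continuous_pi
  intro x
  have h1 : Continuous fun z : ↥(Ellis φ) × ↥(Ellis φ) =>
      ((z.1 : ↥(Ellis φ)), (z.2 : K → K) x) :=
    continuous_fst.prodMk
      ((continuous_apply x).comp (continuous_subtype_val.comp continuous_snd))
  exact (ellis_eval_cont hds).comp h1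

private lemma exists_idem' {S : Set (K → K)} (hclosed : IsClosed S) (hne : S.Nonempty)
    (hcomp : ∀ a ∈ S, ∀ b ∈ S, a ∘ b ∈ S) : ∃ u ∈ S, u ∘ u = u := by
  haveI : Nonempty ↥S := hne.to_subtype
  haveI : CompactSpace ↥S := isCompact_iff_compactSpace.mp hclosed.isCompact
  letI : Semigroup ↥S :=
    { mul := fun a b => ⟨(a : K → K) ∘ (b : K → K), hcomp a a.2 b b.2⟩
      mul_assoc := fun _ _ _ => rfl }
  have hmul : ∀ r : ↥S, Continuous (· * r) := by
    intro r
    apply Continuous.subtype_mk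
    apply continuous_pi
    intro x
    exact (continuous_apply ((r : K → K) x)).comp continuous_subtype_val
  obtain ⟨m, hm⟩ := exists_idempotent_of_compact_t2_of_continuous_mul_left hmul
  exact ⟨(m : K → K), m.2, congrArg Subtype.val hm⟩

private lemma ellis_inv (hφ : Continuous φ) (hds : DiscreteSpectrum φ) {ψ : K → K}
    (hψ : ψ ∈ Ellis φ) : ∃ χ ∈ Ellis φ, ψ ∘ χ = id ∧ χ ∘ ψ = id := by
  have hψc : Continuous ψ := ellis_continuous hds hψ
  have hiter : ∀ n, ψ^[n] ∈ Ellis φ := by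
    intro n
    induction n with
    | zero =>
      rw [Function.iterate_zero]
      exact subset_closure ⟨0, (Function.iterate_zero φ).symm⟩
    | succ n ih =>
      rw [Function.iterate_succ']
      exact ellis_comp_mem hφ hψ ih
  set u : ℕ → K → K := fun n => ψ^[n + 1] with hu
  have hucont : ∀ n, Continuous (u n) := fun n => hψc.iterate (n + 1)
  have huc : ∀ n m, ∃ k, u n ∘ u m = u k := fun n m =>
    ⟨n + 1 + m, (Function.iterate_add ψ (n + 1) (m + 1)).symm⟩
  have hsub : closure (Set.range u) ⊆ Ellis φ := by
    apply closure_minimal ?_ (isClosed_ellis φ)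
    rintro - ⟨n, rfl⟩
    exact hiter (n + 1)
  obtain ⟨e, heM, he⟩ := exists_idem' isClosed_closure
    ⟨u 0, subset_closure (Set.mem_range_self 0)⟩ (closure_range_comp hucont huc)
  have heE : e ∈ Ellis φ := hsub heM
  have hid : e = id := by
    funext x
    exact ellis_injective hds heE (congrFun he x)
  rw [hid] at heM
  obtain ⟨G, hG⟩ := mem_closure_range_ultra heM
  obtain ⟨χ, hχE, hχt⟩ := (isClosed_ellis φ).isCompact.ultrafilter_le_nhds
    (G.map fun n => ψ^[n]) (by
      rw [Ultrafilter.coe_map]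
      exact le_principal_iff.mpr (Filter.mem_map.mpr (Filter.univ_mem' fun n => hiter n)))
  have hχt' : Filter.Tendsto (fun n => ψ^[n]) G (𝓝 χ) := by
    rwa [Ultrafilter.coe_map] at hχt
  have hcomp : ψ ∘ χ = id := by
    funext x
    have h1 : Filter.Tendsto (fun n => ψ (ψ^[n] x)) G (𝓝 (ψ (χ x))) :=
      (hψc.tendsto _).comp (tendsto_pi_nhds.mp hχt' x)
    have h2 : Filter.Tendsto (fun n => u n x) G (𝓝 x) := by
      simpa using tendsto_pi_nhds.mp hG x
    have heq : (fun n => ψ (ψ^[n] x)) = fun n => u n x := by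
      funext n
      exact (Function.iterate_succ_apply' ψ n x).symm
    exact tendsto_nhds_unique (heq ▸ h1) h2
  refine ⟨χ, hχE, hcomp, ?_⟩
  rw [← ellis_comm hφ hds hψ hχE]
  exact hcomp

private lemma ellis_inv_cont (hφ : Continuous φ) (hds : DiscreteSpectrum φ)
    (inv : ↥(Ellis φ) → ↥(Ellis φ))
    (hinv : ∀ ψ : ↥(Ellis φ), ((inv ψ : K → K)) ∘ (ψ : K → K) = id) :
    Continuous inv := by
  haveI : CompactSpace ↥(Ellis φ) :=
    isCompact_iff_compactSpace.mp (isClosed_ellis φ).isCompact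
  have huniq : ∀ ψ χ : ↥(Ellis φ), ((χ : K → K)) ∘ (ψ : K → K) = id → χ = inv ψ := by
    intro ψ χ h
    obtain ⟨ψ', hψ'E, hr, hl⟩ := ellis_inv hφ hds ψ.2
    have key : ∀ χ' : K → K, χ' ∘ (ψ : K → K) = id → χ' = ψ' := by
      intro χ' h'
      calc χ' = χ' ∘ ((ψ : K → K) ∘ ψ') := by rw [hr, Function.comp_id]
        _ = (χ' ∘ (ψ : K → K)) ∘ ψ' := by rw [Function.comp_assoc]
        _ = ψ' := by rw [h', Function.id_comp]
    exact Subtype.ext ((key _ h).trans (key _ (hinv ψ)).symm)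
  rw [continuous_iff_isClosed]
  intro C hC
  have hgraph : IsClosed {p : ↥(Ellis φ) × ↥(Ellis φ) |
      ((p.2 : K → K)) ∘ (p.1 : K → K) = id} := by
    have hcont : Continuous fun p : ↥(Ellis φ) × ↥(Ellis φ) =>
        (((p.2 : K → K)) ∘ (p.1 : K → K) : K → K) :=
      (ellis_comp_cont2 hds).comp continuous_swap
    exact (isClosed_singleton (x := (id : K → K))).preimage hcont
  have hset : inv ⁻¹' C = Prod.fst '' ({p : ↥(Ellis φ) × ↥(Ellis φ) |
      ((p.2 : K → K)) ∘ (p.1 : K → K) = id} ∩ (Set.univ ×ˢ C)) := by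
    ext ψ
    constructor
    · intro hmem
      exact ⟨(ψ, inv ψ), ⟨hinv ψ, ⟨trivial, hmem⟩⟩, rfl⟩
    · rintro ⟨⟨ψ₁, χ⟩, ⟨hpg, -, hpC⟩, rfl⟩
      have := huniq ψ₁ χ hpg
      simp only [Set.mem_preimage]
      rwa [← this]
  rw [hset]
  exact (((hgraph.inter (isClosed_univ.prod hC)).isCompact).image continuous_fst).isClosed

end EllisAux

/-- Let `(K, φ)` be a topological dynamical system with discrete spectrum.
Then the Ellis semigroup `E(K, φ)` is a compact subset of `K^K` consisting of homeomorphisms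
of `K`, and under composition it is a commutative topological group: it is closed under
composition, composition is commutative on it and jointly continuous, every element has an
inverse in `E(K, φ)`, and inversion is continuous. -/
theorem ellis_compact_abelian_topological_group
    {K : Type*} [TopologicalSpace K] [CompactSpace K] [T2Space K]
    (φ : K → K) (hφ : Continuous φ) (hds : DiscreteSpectrum φ) :
    IsCompact (Ellis φ) ∧
    (∀ ψ ∈ Ellis φ, ∃ e : K ≃ₜ K, ⇑e = ψ) ∧
    (∀ ψ ∈ Ellis φ, ∀ χ ∈ Ellis φ, ψ ∘ χ ∈ Ellis φ ∧ ψ ∘ χ = χ ∘ ψ) ∧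
    (∀ ψ ∈ Ellis φ, ∃ χ ∈ Ellis φ, ψ ∘ χ = id ∧ χ ∘ ψ = id) ∧
    Continuous (fun z : ↥(Ellis φ) × ↥(Ellis φ) =>
      ((↑z.1 : K → K) ∘ (↑z.2 : K → K) : K → K)) ∧
    (∀ inv : ↥(Ellis φ) → ↥(Ellis φ),
      (∀ ψ : ↥(Ellis φ), (↑(inv ψ) : K → K) ∘ (↑ψ : K → K) = id) →
      Continuous inv) := by
  refine ⟨(isClosed_ellis φ).isCompact, ?_, ?_, ?_, ellis_comp_cont2 hds, ?_⟩
  · intro ψ hψ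
    obtain ⟨χ, hχ, h1, h2⟩ := ellis_inv hφ hds hψ
    exact ⟨Continuous.homeoOfEquivCompactToT2
      (f := ⟨ψ, χ, fun x => congrFun h2 x, fun x => congrFun h1 x⟩)
      (ellis_continuous hds hψ), rfl⟩
  · intro ψ hψ χ hχ
    exact ⟨ellis_comp_mem hφ hψ hχ, ellis_comm hφ hds hψ hχ⟩
  · intro ψ hψ
    exact ellis_inv hφ hds hψ
  · intro inv hinv
    exact ellis_inv_cont hφ hds inv hinv
end

section
/- Let (K, φ) be a topological dynamical system with discrete spectrum, q : K → L a projection onto its maximal trivial factor, and s : L → K a continuous section of q (i.e., q ∘ s = id_L). Then the map Φ : E(K, φ) × L → K, (ψ, l) ↦ ψ(s(l)), is a continuous surjection satisfying q(Φ(ψ, l)) = l and Φ(φ ∘ ψ, l) = φ(Φ(ψ, l)) for all ψ, l; moreover Φ(ψ, l) = Φ(ψ', l') holds if and only if l = l' and ψ agrees with ψ' on the fiber K_l. Consequently (K, L, q; φ) is isomorphic to its Ellis group bundle, the quotient of E(K, φ) × L by this relation. -/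
set_option linter.unusedSectionVars false
set_option maxHeartbeats 1000000

section Aux

variable {K L : Type*} [TopologicalSpace K] [CompactSpace K] [T2Space K]
  [TopologicalSpace L] [CompactSpace L] [T2Space L]

lemma iterate_mem_ellis (φ : K → K) (n : ℕ) : φ^[n] ∈ Ellis φ :=
  subset_closure ⟨n, rfl⟩

lemma id_mem_ellis (φ : K → K) : id ∈ Ellis φ := by
  simpa using iterate_mem_ellis φ 0

lemma phi_mem_ellis (φ : K → K) : φ ∈ Ellis φ := by
  simpa using iterate_mem_ellis φ 1

lemma ellis_induction {φ : K → K} {S : Set (K → K)} (hS : IsClosed S)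
    (h : ∀ n : ℕ, φ^[n] ∈ S) {ψ : K → K} (hψ : ψ ∈ Ellis φ) : ψ ∈ S := by
  refine closure_minimal ?_ hS hψ
  rintro χ ⟨n, rfl⟩
  exact h n

lemma ellis_eigen {φ : K → K} (f : C(K, ℂ)) (lam : ℂ)
    (hf : ∀ x, f (φ x) = lam * f x) {ψ : K → K} (hψ : ψ ∈ Ellis φ) (x y : K) :
    f (ψ x) * f y = f (ψ y) * f x := by
  have hiter : ∀ (n : ℕ) (x : K), f (φ^[n] x) = lam ^ n * f x := by
    intro n
    induction n with
    | zero => simp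
    | succ n ih =>
      intro x
      rw [Function.iterate_succ_apply', hf, ih]
      ring
  have hSc : IsClosed {χ : K → K | ∀ x y, f (χ x) * f y = f (χ y) * f x} := by
    have : {χ : K → K | ∀ x y, f (χ x) * f y = f (χ y) * f x} =
        ⋂ (a : K) (b : K), {χ : K → K | f (χ a) * f b = f (χ b) * f a} := by
      ext χ; simp [Set.mem_iInter]
    rw [this]
    exact isClosed_iInter fun a => isClosed_iInter fun b =>
      isClosed_eq ((f.continuous.comp (continuous_apply a)).mul continuous_const)
        ((f.continuous.comp (continuous_apply b)).mul continuous_const)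
  exact ellis_induction hSc (fun n a b => by rw [hiter, hiter]; ring) hψ x y

lemma ellis_q {φ : K → K} (q : K → L) (hq : Continuous q)
    (hinv : ∀ x, q (φ x) = q x) {ψ : K → K} (hψ : ψ ∈ Ellis φ) (x : K) :
    q (ψ x) = q x := by
  have hiter : ∀ (n : ℕ) (x : K), q (φ^[n] x) = q x := by
    intro n
    induction n with
    | zero => simp
    | succ n ih =>
      intro x
      rw [Function.iterate_succ_apply', hinv, ih]
  have hSc : IsClosed {χ : K → K | ∀ x, q (χ x) = q x} := by
    have : {χ : K → K | ∀ x, q (χ x) = q x} =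
        ⋂ (a : K), {χ : K → K | q (χ a) = q a} := by
      ext χ; simp [Set.mem_iInter]
    rw [this]
    exact isClosed_iInter fun a =>
      isClosed_eq (hq.comp (continuous_apply a)) continuous_const
  exact ellis_induction hSc (fun n a => hiter n a) hψ x

lemma norm_eq_of_q_eq {φ : K → K} {q : K → L} (hq : Continuous q)
    (hmax : ∀ f : C(K, ℂ), (∀ x, f (φ x) = f x) ↔ ∃ g : C(L, ℂ), f = g.comp ⟨q, hq⟩)
    (f : C(K, ℂ)) (lam : ℂ) (hlam : ‖lam‖ = 1) (hf : ∀ x, f (φ x) = lam * f x)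
    {z w : K} (hzw : q z = q w) : ‖f z‖ = ‖f w‖ := by
  have hl : lam * star lam = 1 := by
    have : lam * star lam = (Complex.normSq lam : ℂ) := Complex.mul_conj lam
    rw [this, Complex.normSq_eq_norm_sq, hlam]
    norm_num
  have key : ∀ x, (f * star f) (φ x) = (f * star f) x := by
    intro x
    have h1 : f (φ x) * star (f (φ x)) = (lam * star lam) * (f x * star (f x)) := by
      rw [hf, star_mul']; ring
    simp only [ContinuousMap.mul_apply, ContinuousMap.star_apply]
    rw [h1, hl, one_mul]
  obtain ⟨g, hg⟩ := (hmax (f * star f)).mp key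
  have happ : ∀ a : K, f a * star (f a) = g (q a) := by
    intro a
    have := DFunLike.congr_fun hg a
    simpa [ContinuousMap.mul_apply, ContinuousMap.star_apply] using this
  have h2 : (Complex.normSq (f z) : ℂ) = (Complex.normSq (f w) : ℂ) := by
    rw [← Complex.mul_conj, ← Complex.mul_conj]
    show f z * star (f z) = f w * star (f w)
    rw [happ z, happ w, hzw]
  have h3 : Complex.normSq (f z) = Complex.normSq (f w) := by exact_mod_cast h2
  rw [Complex.norm_def, Complex.norm_def, h3]

lemma eigen_separating {φ : K → K} (hds : DiscreteSpectrum φ) {x y : K}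
    (h : ∀ f : C(K, ℂ), (f ≠ 0 ∧ ∃ lam : ℂ, ‖lam‖ = 1 ∧ ∀ z, f (φ z) = lam * f z) →
      f x = f y) : x = y := by
  have hall : ∀ f : C(K, ℂ), f x = f y := by
    intro f
    have hcl : IsClosed {f : C(K, ℂ) | f x = f y} :=
      isClosed_eq (continuous_eval_const x) (continuous_eval_const y)
    have hsub : (↑(Submodule.span ℂ
        {f : C(K, ℂ) | f ≠ 0 ∧ ∃ lam : ℂ, ‖lam‖ = 1 ∧ ∀ x, f (φ x) = lam * f x}) :
          Set C(K, ℂ)) ⊆ {f : C(K, ℂ) | f x = f y} := by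
      intro f hf
      induction hf using Submodule.span_induction with
      | mem g hg => exact h g hg
      | zero => simp
      | add g₁ g₂ _ _ h1 h2 => simp only [Set.mem_setOf_eq, ContinuousMap.add_apply] at *; rw [h1, h2]
      | smul a g _ hg => simp only [Set.mem_setOf_eq, ContinuousMap.smul_apply] at *; rw [hg]
    have hclosure : closure (↑(Submodule.span ℂ
        {f : C(K, ℂ) | f ≠ 0 ∧ ∃ lam : ℂ, ‖lam‖ = 1 ∧ ∀ x, f (φ x) = lam * f x}) :
          Set C(K, ℂ)) ⊆ {f : C(K, ℂ) | f x = f y} := closure_minimal hsub hcl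
    have hds' : Dense (↑(Submodule.span ℂ
        {f : C(K, ℂ) | f ≠ 0 ∧ ∃ lam : ℂ, ‖lam‖ = 1 ∧ ∀ x, f (φ x) = lam * f x}) :
          Set C(K, ℂ)) := hds
    have := hds'.closure_eq ▸ hclosure
    exact this (Set.mem_univ f)
  by_contra hxy
  obtain ⟨f, hf0, hf1, -⟩ := exists_continuous_zero_one_of_isClosed
    (isClosed_singleton (x := x)) (isClosed_singleton (x := y))
    (by simp [Set.disjoint_singleton_left, hxy])
  have := hall ⟨fun z => (f z : ℂ), Complex.continuous_ofReal.comp f.continuous⟩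
  simp only [ContinuousMap.coe_mk] at this
  rw [hf0 rfl, hf1 rfl] at this
  norm_num at this


lemma ellis_eval_key {φ : K → K} (hds : DiscreteSpectrum φ) (f : C(K, ℂ)) :
    Continuous fun p : ↥(Ellis φ) × K => f ((p.1 : K → K) p.2) := by
  classical
  set V : Set C(K, ℂ) :=
    {g : C(K, ℂ) | Continuous fun p : ↥(Ellis φ) × K => g ((p.1 : K → K) p.2)} with hV
  have hspan : (↑(Submodule.span ℂ
      {f : C(K, ℂ) | f ≠ 0 ∧ ∃ lam : ℂ, ‖lam‖ = 1 ∧ ∀ x, f (φ x) = lam * f x}) :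
        Set C(K, ℂ)) ⊆ V := by
    intro g hg
    induction hg using Submodule.span_induction with
    | mem g hg =>
      obtain ⟨hg0, lam, hlam, hge⟩ := hg
      have hx₀ : ∃ x₀ : K, g x₀ ≠ 0 := by
        by_contra hc
        push_neg at hc
        exact hg0 (ContinuousMap.ext fun z => by simp [hc z])
      obtain ⟨x₀, hx₀⟩ := hx₀
      have heq : (fun p : ↥(Ellis φ) × K => g ((p.1 : K → K) p.2)) =
          fun p : ↥(Ellis φ) × K => g ((p.1 : K → K) x₀) * g p.2 * (g x₀)⁻¹ := by
        funext p
        rw [eq_mul_inv_iff_mul_eq₀ hx₀]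
        exact ellis_eigen g lam hge p.1.2 p.2 x₀
      show Continuous _
      rw [heq]
      exact ((g.continuous.comp ((continuous_apply x₀).comp
        (continuous_subtype_val.comp continuous_fst))).mul
        (g.continuous.comp continuous_snd)).mul continuous_const
    | zero => show Continuous _; simp only [ContinuousMap.zero_apply]; exact continuous_const
    | add g₁ g₂ _ _ h1 h2 =>
      show Continuous _
      simp only [ContinuousMap.add_apply]
      exact Continuous.add h1 h2
    | smul a g _ hg =>
      show Continuous _
      simp only [ContinuousMap.smul_apply, smul_eq_mul]
      exact Continuous.mul continuous_const hg
  -- f is in the closure of the span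
  have hf : f ∈ closure (↑(Submodule.span ℂ
      {f : C(K, ℂ) | f ≠ 0 ∧ ∃ lam : ℂ, ‖lam‖ = 1 ∧ ∀ x, f (φ x) = lam * f x}) :
        Set C(K, ℂ)) := by
    have hds' : Dense (↑(Submodule.span ℂ
        {f : C(K, ℂ) | f ≠ 0 ∧ ∃ lam : ℂ, ‖lam‖ = 1 ∧ ∀ x, f (φ x) = lam * f x}) :
          Set C(K, ℂ)) := hds
    rw [hds'.closure_eq]
    trivial
  have hchoice : ∀ n : ℕ, ∃ g ∈ (↑(Submodule.span ℂ
      {f : C(K, ℂ) | f ≠ 0 ∧ ∃ lam : ℂ, ‖lam‖ = 1 ∧ ∀ x, f (φ x) = lam * f x}) :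
        Set C(K, ℂ)), dist f g < 1 / (n + 1) :=
    fun n => Metric.mem_closure_iff.mp hf _ (by positivity)
  choose u hu hud using hchoice
  have huc : ∀ n, Continuous fun p : ↥(Ellis φ) × K => u n ((p.1 : K → K) p.2) :=
    fun n => hspan (hu n)
  have htu : TendstoUniformly (fun n (p : ↥(Ellis φ) × K) => u n ((p.1 : K → K) p.2))
      (fun p : ↥(Ellis φ) × K => f ((p.1 : K → K) p.2)) Filter.atTop := by
    rw [Metric.tendstoUniformly_iff]
    intro ε hε
    obtain ⟨N, hN⟩ := exists_nat_gt (1 / ε)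
    filter_upwards [Filter.eventually_ge_atTop N] with n hn p
    have h1 : (1 : ℝ) / ε < (n : ℝ) + 1 := by
      have : (N : ℝ) ≤ n := by exact_mod_cast hn
      linarith
    have h2 : (1 : ℝ) / ((n : ℝ) + 1) < ε := by
      rw [div_lt_iff₀ (by positivity)]
      rw [div_lt_iff₀ hε] at h1
      nlinarith
    calc dist (f ((p.1 : K → K) p.2)) (u n ((p.1 : K → K) p.2))
        ≤ dist f (u n) := ContinuousMap.dist_apply_le_dist _
      _ < 1 / (n + 1) := hud n
      _ < ε := h2
  exact htu.continuous (Filter.Eventually.of_forall huc).frequently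

lemma ellis_eval_continuous {φ : K → K} (hds : DiscreteSpectrum φ) :
    Continuous fun p : ↥(Ellis φ) × K => (p.1 : K → K) p.2 := by
  rw [continuous_iff_continuousAt]
  intro p₀
  rw [ContinuousAt, Filter.tendsto_def]
  intro U hU
  obtain ⟨V, hVU, hVopen, hV⟩ := mem_nhds_iff.mp hU
  obtain ⟨f, hf0, hf1, -⟩ := exists_continuous_zero_one_of_isClosed
    (isClosed_singleton (x := (p₀.1 : K → K) p₀.2)) hVopen.isClosed_compl
    (by simp [Set.disjoint_singleton_left, hV])
  set F : C(K, ℂ) := ⟨fun z => (f z : ℂ), Complex.continuous_ofReal.comp f.continuous⟩ with hF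
  have hcont := ellis_eval_key hds F
  have hopen : IsOpen {p : ↥(Ellis φ) × K | ‖F ((p.1 : K → K) p.2)‖ < 1 / 2} :=
    isOpen_lt hcont.norm continuous_const
  refine Filter.mem_of_superset (hopen.mem_nhds ?_) ?_
  · show ‖F ((p₀.1 : K → K) p₀.2)‖ < 1 / 2
    have : f ((p₀.1 : K → K) p₀.2) = 0 := hf0 rfl
    simp [hF, this]
  · intro p hp
    have hpV : (p.1 : K → K) p.2 ∈ V := by
      by_contra hv
      have : f ((p.1 : K → K) p.2) = 1 := hf1 hv
      have : ‖F ((p.1 : K → K) p.2)‖ = 1 := by simp [hF, this]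
      rw [Set.mem_setOf_eq, this] at hp
      norm_num at hp
    exact hVU hpV


lemma ellis_mem_continuous {φ : K → K} (hds : DiscreteSpectrum φ) {ψ : K → K}
    (hψ : ψ ∈ Ellis φ) : Continuous ψ := by
  have h := (ellis_eval_continuous hds).comp
    (Continuous.prodMk (continuous_const (y := (⟨ψ, hψ⟩ : ↥(Ellis φ)))) continuous_id)
  exact h

lemma ellis_comp_iterate {φ : K → K} {ψ : K → K} (hψ : ψ ∈ Ellis φ) (m : ℕ) :
    ψ ∘ φ^[m] ∈ Ellis φ := by
  have hρ : Continuous fun χ : K → K => χ ∘ φ^[m] :=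
    continuous_pi fun x => continuous_apply (φ^[m] x)
  have himg : (fun χ : K → K => χ ∘ φ^[m]) '' {χ : K → K | ∃ n, χ = φ^[n]} ⊆
      {χ : K → K | ∃ n, χ = φ^[n]} := by
    rintro _ ⟨χ, ⟨n, rfl⟩, rfl⟩
    exact ⟨n + m, (Function.iterate_add φ n m).symm⟩
  have hmem : ψ ∘ φ^[m] ∈
      (fun χ : K → K => χ ∘ φ^[m]) '' closure {χ : K → K | ∃ n, χ = φ^[n]} := ⟨ψ, hψ, rfl⟩
  exact closure_mono himg (image_closure_subset_closure_image hρ hmem)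

lemma ellis_comp {φ : K → K} (hds : DiscreteSpectrum φ) {ψ θ : K → K}
    (hψ : ψ ∈ Ellis φ) (hθ : θ ∈ Ellis φ) : ψ ∘ θ ∈ Ellis φ := by
  have hψc := ellis_mem_continuous hds hψ
  have hlc : Continuous fun χ : K → K => ψ ∘ χ :=
    continuous_pi fun x => hψc.comp (continuous_apply x)
  have himg : (fun χ : K → K => ψ ∘ χ) '' {χ : K → K | ∃ n, χ = φ^[n]} ⊆ Ellis φ := by
    rintro _ ⟨χ, ⟨n, rfl⟩, rfl⟩
    exact ellis_comp_iterate hψ n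
  have hmem : ψ ∘ θ ∈
      (fun χ : K → K => ψ ∘ χ) '' closure {χ : K → K | ∃ n, χ = φ^[n]} := ⟨θ, hθ, rfl⟩
  have h1 := image_closure_subset_closure_image hlc hmem
  have h2 : closure ((fun χ : K → K => ψ ∘ χ) '' {χ : K → K | ∃ n, χ = φ^[n]}) ⊆ Ellis φ :=
    closure_minimal himg isClosed_closure
  exact h2 h1

lemma exists_left_inverse_of_phi {φ : K → K} (hφ : Continuous φ) (hds : DiscreteSpectrum φ)
    (q : K → L) (hq : Continuous q) (hinv : ∀ x, q (φ x) = q x)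
    (hmax : ∀ f : C(K, ℂ), (∀ x, f (φ x) = f x) ↔ ∃ g : C(L, ℂ), f = g.comp ⟨q, hq⟩) :
    ∃ θ : K → K, θ ∈ Ellis φ ∧ φ ∘ θ = id := by
  classical
  set I1 : Set (K → K) := {χ : K → K | ∃ n : ℕ, χ = φ^[n + 1]} with hI1
  have hI1sub : I1 ⊆ Ellis φ := by
    rintro _ ⟨n, rfl⟩
    exact iterate_mem_ellis φ (n + 1)
  have hTE : closure I1 ⊆ Ellis φ := closure_minimal hI1sub isClosed_closure
  have hTne : (closure I1).Nonempty := by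
    refine ⟨φ, subset_closure ?_⟩
    show ∃ n : ℕ, φ = φ^[n + 1]
    exact ⟨0, by simp⟩
  have hmulI : ∀ a ∈ closure I1, ∀ m : ℕ, a ∘ φ^[m + 1] ∈ closure I1 := by
    intro a ha m
    have hρ : Continuous fun χ : K → K => χ ∘ φ^[m + 1] :=
      continuous_pi fun x => continuous_apply _
    have himg : (fun χ : K → K => χ ∘ φ^[m + 1]) '' I1 ⊆ I1 := by
      rintro _ ⟨χ, ⟨n, rfl⟩, rfl⟩
      refine ⟨n + m + 1, ?_⟩
      show φ^[n + 1] ∘ φ^[m + 1] = φ^[n + m + 1 + 1]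
      rw [show n + m + 1 + 1 = (n + 1) + (m + 1) from by omega]
      exact (Function.iterate_add φ (n + 1) (m + 1)).symm
    exact closure_mono himg (image_closure_subset_closure_image hρ ⟨a, ha, rfl⟩)
  have hmulT : ∀ a ∈ closure I1, ∀ b ∈ closure I1, a ∘ b ∈ closure I1 := by
    intro a ha b hb
    have hac : Continuous a := ellis_mem_continuous hds (hTE ha)
    have hlc : Continuous fun χ : K → K => a ∘ χ :=
      continuous_pi fun x => hac.comp (continuous_apply x)
    have himg : (fun χ : K → K => a ∘ χ) '' I1 ⊆ closure I1 := by
      rintro _ ⟨χ, ⟨n, rfl⟩, rfl⟩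
      exact hmulI a ha n
    exact (closure_minimal himg isClosed_closure)
      (image_closure_subset_closure_image hlc ⟨b, hb, rfl⟩)
  -- Ellis–Numakura on the subtype
  haveI : Nonempty ↥(closure I1) := hTne.to_subtype
  haveI : CompactSpace ↥(closure I1) :=
    isCompact_iff_compactSpace.mp (isClosed_closure.isCompact)
  letI : Semigroup ↥(closure I1) :=
    { mul := fun a b => ⟨a.1 ∘ b.1, hmulT a.1 a.2 b.1 b.2⟩,
      mul_assoc := fun a b c => Subtype.ext rfl }
  have hmul_left : ∀ r : ↥(closure I1), Continuous (· * r) := by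
    intro r
    apply Continuous.subtype_mk
    exact continuous_pi fun x => (continuous_apply (r.1 x)).comp continuous_subtype_val
  obtain ⟨u, hu⟩ := exists_idempotent_of_compact_t2_of_continuous_mul_left hmul_left
  have huu : ∀ x, u.1 (u.1 x) = u.1 x := fun x =>
    congrFun (congrArg Subtype.val hu) x
  have huE : u.1 ∈ Ellis φ := hTE u.2
  have huid : u.1 = id := by
    funext x
    refine eigen_separating hds ?_
    rintro f ⟨hf0, lam, hlam, hfe⟩
    show f (u.1 x) = f x
    have h1 := ellis_eigen f lam hfe huE (u.1 x) x
    rw [huu] at h1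
    have hnorm : ‖f (u.1 x)‖ = ‖f x‖ :=
      norm_eq_of_q_eq hq hmax f lam hlam hfe (ellis_q q hq hinv huE x)
    by_cases hx : f x = 0
    · rw [hx]
      have : ‖f (u.1 x)‖ = 0 := by rw [hnorm, hx, norm_zero]
      simpa using norm_eq_zero.mp this
    · have hux : f (u.1 x) ≠ 0 := by
        intro h
        rw [h, norm_zero] at hnorm
        exact hx (norm_eq_zero.mp hnorm.symm)
      exact (mul_left_cancel₀ hux h1).symm
  have hidT : id ∈ closure I1 := huid ▸ u.2
  have hlφ : Continuous fun χ : K → K => φ ∘ χ :=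
    continuous_pi fun x => hφ.comp (continuous_apply x)
  have hcompact : IsCompact ((fun χ : K → K => φ ∘ χ) '' Ellis φ) :=
    (isClosed_closure.isCompact).image hlφ
  have hsub : I1 ⊆ (fun χ : K → K => φ ∘ χ) '' Ellis φ := by
    rintro _ ⟨n, rfl⟩
    exact ⟨φ^[n], iterate_mem_ellis φ n, (Function.iterate_succ' φ n).symm⟩
  have hTsub : closure I1 ⊆ (fun χ : K → K => φ ∘ χ) '' Ellis φ :=
    closure_minimal hsub hcompact.isClosed
  obtain ⟨θ, hθE, hθ⟩ := hTsub hidT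
  exact ⟨θ, hθE, hθ⟩


lemma ellis_surj_core {φ : K → K} (hφ : Continuous φ) (hds : DiscreteSpectrum φ)
    (q : K → L) (hq : Continuous q) (hinv : ∀ x, q (φ x) = q x)
    (hmax : ∀ f : C(K, ℂ), (∀ x, f (φ x) = f x) ↔ ∃ g : C(L, ℂ), f = g.comp ⟨q, hq⟩)
    (y x₀ : K) (hy : q y = q x₀) :
    ∃ ψ ∈ Ellis φ, ψ y = x₀ := by
  classical
  by_cases hmain : (Ellis φ ∩ ⋂ i : {f : C(K, ℂ) //
      f ≠ 0 ∧ ∃ lam : ℂ, ‖lam‖ = 1 ∧ ∀ x, f (φ x) = lam * f x},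
      {χ : K → K | (i : C(K, ℂ)) (χ y) = (i : C(K, ℂ)) x₀}).Nonempty
  · obtain ⟨ψ, hψE, hψA⟩ := hmain
    refine ⟨ψ, hψE, eigen_separating hds ?_⟩
    intro f hf
    exact Set.mem_iInter.mp hψA ⟨f, hf⟩
  · exfalso
    rw [Set.not_nonempty_iff_eq_empty] at hmain
    obtain ⟨t, ht⟩ := (isClosed_closure.isCompact (s := Ellis φ)).elim_finite_subfamily_closed
      _ (fun i : {f : C(K, ℂ) //
          f ≠ 0 ∧ ∃ lam : ℂ, ‖lam‖ = 1 ∧ ∀ x, f (φ x) = lam * f x} =>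
        isClosed_eq ((i : C(K, ℂ)).continuous.comp (continuous_apply y)) continuous_const)
      hmain
    have hlamall : ∀ i : {f : C(K, ℂ) //
        f ≠ 0 ∧ ∃ lam : ℂ, ‖lam‖ = 1 ∧ ∀ x, f (φ x) = lam * f x},
        ∃ lam : ℂ, ‖lam‖ = 1 ∧ ∀ x, (i : C(K, ℂ)) (φ x) = lam * (i : C(K, ℂ)) x :=
      fun i => i.2.2
    choose lam hlam1 hlame using hlamall
    obtain ⟨θ₀, hθ₀E, hθ₀⟩ := exists_left_inverse_of_phi hφ hds q hq hinv hmax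
    haveI hEllisNe : Nonempty ↥(Ellis φ) := ⟨⟨id, id_mem_ellis φ⟩⟩
    set G : K → ↥(Ellis φ) → ℝ :=
      fun z ψ => ∑ i ∈ t, ‖(i : C(K, ℂ)) z - (i : C(K, ℂ)) ((ψ : K → K) y)‖ with hG
    have hGnonneg : ∀ z ψ, 0 ≤ G z ψ := fun z ψ => Finset.sum_nonneg fun i _ => norm_nonneg _
    have hGbdd : ∀ z, BddBelow (Set.range (G z)) :=
      fun z => ⟨0, by rintro _ ⟨ψ, rfl⟩; exact hGnonneg z ψ⟩
    set d : K → ℝ := fun z => ⨅ ψ : ↥(Ellis φ), G z ψ with hd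
    have hd_le : ∀ z ψ, d z ≤ G z ψ := fun z ψ => ciInf_le (hGbdd z) ψ
    have hle_d : ∀ z c, (∀ ψ, c ≤ G z ψ) → c ≤ d z := fun z c h => le_ciInf h
    have hd0 : ∀ z, 0 ≤ d z := fun z => hle_d z 0 (hGnonneg z)
    have hdy : d y = 0 := by
      refine le_antisymm ?_ (hd0 y)
      have h1 : G y ⟨id, id_mem_ellis φ⟩ = 0 := by
        rw [hG]
        simp
      rw [← h1]
      exact hd_le y _
    -- invariance of d
    have hdinv : ∀ z, d (φ z) = d z := by
      intro z
      apply le_antisymm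
      · refine hle_d _ _ fun ψ => ?_
        have hmem : (φ ∘ (ψ : K → K)) ∈ Ellis φ := ellis_comp hds (phi_mem_ellis φ) ψ.2
        have hcalc : G (φ z) ⟨φ ∘ (ψ : K → K), hmem⟩ = G z ψ := by
          rw [hG]
          refine Finset.sum_congr rfl fun i _ => ?_
          have h1 : (i : C(K, ℂ)) (φ z) = lam i * (i : C(K, ℂ)) z := hlame i z
          have h2 : (i : C(K, ℂ)) ((φ ∘ (ψ : K → K)) y) =
              lam i * (i : C(K, ℂ)) ((ψ : K → K) y) := hlame i _
          rw [h1, h2, ← mul_sub, norm_mul, hlam1 i, one_mul]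
        calc d (φ z) ≤ G (φ z) ⟨φ ∘ (ψ : K → K), hmem⟩ := hd_le _ _
          _ = G z ψ := hcalc
      · refine hle_d _ _ fun ψ => ?_
        have hθE : (θ₀ ∘ (ψ : K → K)) ∈ Ellis φ := ellis_comp hds hθ₀E ψ.2
        have hφθ : ∀ w, φ ((θ₀ ∘ (ψ : K → K)) w) = (ψ : K → K) w := by
          intro w
          have := congrFun hθ₀ ((ψ : K → K) w)
          simpa using this
        have hcalc : G (φ z) ψ = G z ⟨θ₀ ∘ (ψ : K → K), hθE⟩ := by
          rw [hG]
          refine Finset.sum_congr rfl fun i _ => ?_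
          have h1 : (i : C(K, ℂ)) (φ z) = lam i * (i : C(K, ℂ)) z := hlame i z
          have h2 : (i : C(K, ℂ)) ((ψ : K → K) y) =
              lam i * (i : C(K, ℂ)) ((θ₀ ∘ (ψ : K → K)) y) := by
            conv_lhs => rw [← hφθ y]
            exact hlame i _
          rw [h1, h2, ← mul_sub, norm_mul, hlam1 i, one_mul]
        calc d z ≤ G z ⟨θ₀ ∘ (ψ : K → K), hθE⟩ := hd_le _ _
          _ = G (φ z) ψ := hcalc.symm
    -- Lipschitz estimate
    have hlip : ∀ z w, d z - d w ≤ ∑ i ∈ t, ‖(i : C(K, ℂ)) z - (i : C(K, ℂ)) w‖ := by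
      intro z w
      have h1 : ∀ ψ : ↥(Ellis φ),
          d z - (∑ i ∈ t, ‖(i : C(K, ℂ)) z - (i : C(K, ℂ)) w‖) ≤ G w ψ := by
        intro ψ
        have h2 : G z ψ ≤ (∑ i ∈ t, ‖(i : C(K, ℂ)) z - (i : C(K, ℂ)) w‖) + G w ψ := by
          rw [hG, ← Finset.sum_add_distrib]
          refine Finset.sum_le_sum fun i _ => ?_
          exact norm_sub_le_norm_sub_add_norm_sub _ _ _
        have h3 := hd_le z ψ
        linarith
      have h4 := le_ciInf h1
      have h5 : d w = ⨅ ψ : ↥(Ellis φ), G w ψ := rfl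
      rw [← h5] at h4
      linarith
    -- continuity of d
    have hdcont : Continuous d := by
      rw [continuous_iff_continuousAt]
      intro z
      have hMc : Continuous fun w => ∑ i ∈ t, ‖(i : C(K, ℂ)) w - (i : C(K, ℂ)) z‖ :=
        continuous_finset_sum _ fun i _ =>
          ((i : C(K, ℂ)).continuous.sub continuous_const).norm
      have hM : Filter.Tendsto (fun w => ∑ i ∈ t, ‖(i : C(K, ℂ)) w - (i : C(K, ℂ)) z‖)
          (nhds z) (nhds 0) := by
        have := hMc.tendsto z
        simpa using this
      rw [ContinuousAt, tendsto_iff_dist_tendsto_zero]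
      refine squeeze_zero (fun w => dist_nonneg) (fun w => ?_) hM
      rw [Real.dist_eq, abs_sub_le_iff]
      constructor
      · exact hlip w z
      · have := hlip z w
        have hrev : ∑ i ∈ t, ‖(i : C(K, ℂ)) z - (i : C(K, ℂ)) w‖ =
            ∑ i ∈ t, ‖(i : C(K, ℂ)) w - (i : C(K, ℂ)) z‖ :=
          Finset.sum_congr rfl fun i _ => norm_sub_rev _ _
        linarith
    -- d is invariant hence factors through q
    obtain ⟨g, hg⟩ := (hmax ⟨fun z => ((d z : ℝ) : ℂ),
      Complex.continuous_ofReal.comp hdcont⟩).mp (fun z => by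
        show ((d (φ z) : ℝ) : ℂ) = ((d z : ℝ) : ℂ)
        rw [hdinv z])
    have hdx₀ : d x₀ = 0 := by
      have h1 : ((d x₀ : ℝ) : ℂ) = g (q x₀) := by
        have := DFunLike.congr_fun hg x₀
        simpa using this
      have h2 : ((d y : ℝ) : ℂ) = g (q y) := by
        have := DFunLike.congr_fun hg y
        simpa using this
      rw [hy] at h2
      have h3 : ((d x₀ : ℝ) : ℂ) = ((d y : ℝ) : ℂ) := by rw [h1, h2]
      have h4 : d x₀ = d y := by exact_mod_cast h3
      rw [h4, hdy]
    -- positivity: contradiction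
    have hpos : ∀ ψ : ↥(Ellis φ), 0 < G x₀ ψ := by
      intro ψ
      have hnotin : (ψ : K → K) ∉ ⋂ i ∈ t, {χ : K → K |
          (i : C(K, ℂ)) (χ y) = (i : C(K, ℂ)) x₀} := by
        intro hmem
        have : (ψ : K → K) ∈ (∅ : Set (K → K)) := ht ▸ ⟨ψ.2, hmem⟩
        exact this
      rw [Set.mem_iInter₂] at hnotin
      push_neg at hnotin
      obtain ⟨i, hit, hne⟩ := hnotin
      refine Finset.sum_pos' (fun j _ => norm_nonneg _) ⟨i, hit, ?_⟩
      rw [norm_pos_iff, sub_ne_zero]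
      exact fun h => hne h.symm
    haveI : CompactSpace ↥(Ellis φ) :=
      isCompact_iff_compactSpace.mp isClosed_closure.isCompact
    have hGcont : Continuous (G x₀) := by
      rw [hG]
      exact continuous_finset_sum _ fun i _ =>
        (continuous_const.sub ((i : C(K, ℂ)).continuous.comp
          ((continuous_apply y).comp continuous_subtype_val))).norm
    obtain ⟨ψm, -, hmin⟩ := isCompact_univ.exists_isMinOn
      (Set.univ_nonempty) hGcont.continuousOn
    have hle : G x₀ ψm ≤ d x₀ :=
      hle_d x₀ _ (fun ψ => hmin (Set.mem_univ ψ))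
    have := hpos ψm
    rw [hdx₀] at hle
    linarith


end Aux

/-- Let `(K, φ)` be a topological dynamical system with discrete spectrum,
`q : K → L` a projection onto its maximal trivial factor and `s : L → K` a continuous section
of `q`.  Then `Φ : E(K, φ) × L → K`, `(ψ, l) ↦ ψ (s l)`, is a continuous surjection with
`q (Φ (ψ, l)) = l` and `Φ (φ ∘ ψ, l) = φ (Φ (ψ, l))`, and `Φ (ψ, l) = Φ (ψ', l')` holds iff
`l = l'` and `ψ = ψ'` on the fiber `K_l`.  Consequently `(K, L, q; φ)` is isomorphic to its
Ellis group bundle, the quotient of `E(K, φ) × L` by this relation. -/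
theorem isomorphic_to_ellis_group_bundle
    {K L : Type*} [TopologicalSpace K] [CompactSpace K] [T2Space K]
    [TopologicalSpace L] [CompactSpace L] [T2Space L]
    (φ : K → K) (hφ : Continuous φ) (hds : DiscreteSpectrum φ)
    (q : K → L) (hq : Continuous q) (hqsurj : Function.Surjective q)
    (hinv : ∀ x, q (φ x) = q x)
    (hmax : ∀ f : C(K, ℂ), (∀ x, f (φ x) = f x) ↔ ∃ g : C(L, ℂ), f = g.comp ⟨q, hq⟩)
    (s : L → K) (hs : Continuous s) (hsec : ∀ l, q (s l) = l) :
    Continuous (fun z : ↥(Ellis φ) × L => (↑z.1 : K → K) (s z.2)) ∧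
    Function.Surjective (fun z : ↥(Ellis φ) × L => (↑z.1 : K → K) (s z.2)) ∧
    (∀ (ψ : ↥(Ellis φ)) (l : L), q ((↑ψ : K → K) (s l)) = l) ∧
    (∀ (ψ ψ' : ↥(Ellis φ)) (l : L), (↑ψ' : K → K) = φ ∘ (↑ψ : K → K) →
      (↑ψ' : K → K) (s l) = φ ((↑ψ : K → K) (s l))) ∧
    (∀ (ψ ψ' : ↥(Ellis φ)) (l l' : L),
      (↑ψ : K → K) (s l) = (↑ψ' : K → K) (s l') ↔
        l = l' ∧ Set.EqOn (↑ψ : K → K) (↑ψ' : K → K) (q ⁻¹' {l})) := by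
  classical
  refine ⟨?_, ?_, ?_, ?_, ?_⟩
  · exact (ellis_eval_continuous hds).comp
      (continuous_fst.prodMk (hs.comp continuous_snd))
  · intro x
    obtain ⟨ψ, hψE, hψ⟩ := ellis_surj_core hφ hds q hq hinv hmax (s (q x)) x (hsec (q x))
    exact ⟨(⟨ψ, hψE⟩, q x), hψ⟩
  · intro ψ l
    rw [ellis_q q hq hinv ψ.2, hsec]
  · intro ψ ψ' l h
    rw [h]
    rfl
  · intro ψ ψ' l l'
    constructor
    · intro h
      have hl : l = l' := by
        have h1 : q ((ψ : K → K) (s l)) = l := by rw [ellis_q q hq hinv ψ.2, hsec]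
        have h2 : q ((ψ' : K → K) (s l')) = l' := by rw [ellis_q q hq hinv ψ'.2, hsec]
        rw [← h1, h, h2]
      subst hl
      refine ⟨rfl, fun x hx => ?_⟩
      have hqx : q x = l := hx
      refine eigen_separating hds ?_
      rintro f ⟨hf0, lam, hlam, hfe⟩
      show f ((ψ : K → K) x) = f ((ψ' : K → K) x)
      have e1 := ellis_eigen f lam hfe ψ.2 x (s l)
      have e2 := ellis_eigen f lam hfe ψ'.2 x (s l)
      rw [h] at e1
      by_cases hsl : f (s l) = 0
      · have hqq : q x = q (s l) := by rw [hqx, hsec]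
        have hxn : ‖f x‖ = ‖f (s l)‖ := norm_eq_of_q_eq hq hmax f lam hlam hfe hqq
        have hfx : f x = 0 := by
          rw [hsl, norm_zero] at hxn
          exact norm_eq_zero.mp hxn
        have n1 : ‖f ((ψ : K → K) x)‖ = ‖f x‖ :=
          norm_eq_of_q_eq hq hmax f lam hlam hfe (ellis_q q hq hinv ψ.2 x)
        have n2 : ‖f ((ψ' : K → K) x)‖ = ‖f x‖ :=
          norm_eq_of_q_eq hq hmax f lam hlam hfe (ellis_q q hq hinv ψ'.2 x)
        rw [hfx, norm_zero] at n1 n2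
        rw [norm_eq_zero.mp n1, norm_eq_zero.mp n2]
      · exact mul_right_cancel₀ hsl (e1.trans e2.symm)
    · rintro ⟨rfl, heq⟩
      exact heq (show s l ∈ q ⁻¹' {l} by simp [hsec])
end
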